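/- Suppose r(h) < 1 for every safe history h. Then for every 0 ≤ t ≤ n and every safe history h of length t+1, er(h, π) = ∑_{τ a trajectory with prefix_t τ = h} p_t(τ) · ser_t(τ), where the sum ranges over all trajectories extending h (the terms for unsafe trajectories vanish since ser_t is 0 there). -/

import Mathlib

open Finset
open scoped Classical

noncomputable section

/-- The restriction of a trajectory `τ : Fin (n+1) → S` to its first `t+1` entries. -/
def pre {S : Type*} {n : ℕ} (τ : Fin (n + 1) → S) (t : ℕ) (ht : t + 1 ≤ n + 1) :
    Fin (t + 1) → S :=
  fun i => τ (Fin.castLE ht i)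

/-- The immediate risk of a history `h` of length `t+1`. -/
def risk {S A : Type*} [Fintype S] (T : S → A → S → ℝ) (C : Set S)
    (π : (t : ℕ) → (Fin (t + 1) → S) → A) {t : ℕ} (h : Fin (t + 1) → S) : ℝ :=
  ∑ s' ∈ univ.filter (fun s' => s' ∉ C), T (h (Fin.last t)) (π t h) s'

/-- The conditional probability of trajectory `τ` from step `t` on:
`p_t(τ) = ∏_{i=t}^{n-1} T (τ i) (π (prefix_i τ)) (τ (i+1))`. -/
def probFrom {S A : Type*} {n : ℕ} (T : S → A → S → ℝ)
    (π : (t : ℕ) → (Fin (t + 1) → S) → A) (t : ℕ) (τ : Fin (n + 1) → S) : ℝ :=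
  ∏ i ∈ univ.filter (fun i : Fin n => t ≤ (i : ℕ)),
    T (τ i.castSucc) (π i (pre τ i (Nat.succ_le_succ i.isLt.le))) (τ i.succ)

/-- The suffix survival product `P_t(τ) = ∏_{i=t}^{n-1} (1 - r(prefix_i τ))`. -/
def survFrom {S A : Type*} [Fintype S] {n : ℕ} (T : S → A → S → ℝ) (C : Set S)
    (π : (t : ℕ) → (Fin (t + 1) → S) → A) (t : ℕ) (τ : Fin (n + 1) → S) : ℝ :=
  ∏ i ∈ univ.filter (fun i : Fin n => t ≤ (i : ℕ)),
    (1 - risk T C π (pre τ i (Nat.succ_le_succ i.isLt.le)))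

/-- The suffix sequence execution risk `ser_t(τ)`:
`(1 - P_t(τ))/P_t(τ)` for safe trajectories and `0` otherwise. -/
def serFrom {S A : Type*} [Fintype S] {n : ℕ} (T : S → A → S → ℝ) (C : Set S)
    (π : (t : ℕ) → (Fin (t + 1) → S) → A) (t : ℕ) (τ : Fin (n + 1) → S) : ℝ :=
  if ∀ i, τ i ∈ C then (1 - survFrom T C π t τ) / survFrom T C π t τ else 0

/-- The execution risk of the policy `π` after the safe history `h` of length `t+1`:
one minus the conditional probability of the safe trajectories extending `h`. -/
def erHist {S A : Type*} [Fintype S] (n : ℕ) (T : S → A → S → ℝ) (C : Set S)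
    (π : (t : ℕ) → (Fin (t + 1) → S) → A) {t : ℕ} (ht : t + 1 ≤ n + 1)
    (h : Fin (t + 1) → S) : ℝ :=
  1 - ∑ τ ∈ univ.filter (fun τ : Fin (n + 1) → S =>
        (∀ i, τ i ∈ C) ∧ pre τ t ht = h), probFrom T π t τ

-- auxiliary lemmas

lemma pre_self {S : Type*} {n : ℕ} (τ : Fin (n + 1) → S) (ht : n + 1 ≤ n + 1) :
    pre τ n ht = τ :=
  funext fun i => congrArg τ (Fin.ext (Fin.coe_castLE _ _))

lemma filter_ge_self_empty (n : ℕ) :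
    (univ.filter (fun i : Fin n => n ≤ (i : ℕ))) = ∅ := by
  rw [Finset.filter_eq_empty_iff]
  intro i _
  exact Nat.not_le.2 i.isLt

lemma filter_ge_insert {n t : ℕ} (htn : t < n) :
    (univ.filter (fun i : Fin n => t ≤ (i : ℕ)))
      = insert ⟨t, htn⟩ (univ.filter (fun i : Fin n => t + 1 ≤ (i : ℕ))) := by
  ext i
  simp only [mem_filter, mem_univ, true_and, mem_insert, Fin.ext_iff]
  omega

lemma not_mem_filter_ge {n t : ℕ} (htn : t < n) :
    (⟨t, htn⟩ : Fin n) ∉ univ.filter (fun i : Fin n => t + 1 ≤ (i : ℕ)) := by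
  simp

lemma pre_eq_snoc_iff {S : Type*} {n t : ℕ} (τ : Fin (n + 1) → S) (htn : t < n)
    (h : Fin (t + 1) → S) (s' : S) :
    pre τ (t + 1) (by omega) = Fin.snoc h s'
      ↔ pre τ t (by omega) = h ∧ τ ⟨t + 1, by omega⟩ = s' := by
  constructor
  · intro e
    constructor
    · funext i
      have := congrFun e i.castSucc
      rw [Fin.snoc_castSucc] at this
      rw [← this]
      exact congrArg τ (Fin.ext rfl)
    · have := congrFun e (Fin.last (t + 1))
      rw [Fin.snoc_last] at this
      rw [← this]
      exact congrArg τ (Fin.ext rfl)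
  · rintro ⟨e1, e2⟩
    funext j
    refine Fin.lastCases ?_ ?_ j
    · rw [Fin.snoc_last, ← e2]
      exact congrArg τ (Fin.ext rfl)
    · intro i
      rw [Fin.snoc_castSucc, ← congrFun e1 i]
      exact congrArg τ (Fin.ext rfl)

lemma probFrom_succ {S A : Type*} {n t : ℕ} (htn : t < n) (T : S → A → S → ℝ)
    (π : (t : ℕ) → (Fin (t + 1) → S) → A) (τ : Fin (n + 1) → S) :
    probFrom T π t τ
      = T (τ ⟨t, by omega⟩) (π t (pre τ t (by omega))) (τ ⟨t + 1, by omega⟩)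
        * probFrom T π (t + 1) τ := by
  unfold probFrom
  rw [filter_ge_insert htn, Finset.prod_insert (not_mem_filter_ge htn)]
  rfl


lemma survFrom_succ {S A : Type*} [Fintype S] {n t : ℕ} (htn : t < n)
    (T : S → A → S → ℝ) (C : Set S)
    (π : (t : ℕ) → (Fin (t + 1) → S) → A) (τ : Fin (n + 1) → S) :
    survFrom T C π t τ
      = (1 - risk T C π (pre τ t (by omega))) * survFrom T C π (t + 1) τ := by
  unfold survFrom
  rw [filter_ge_insert htn, Finset.prod_insert (not_mem_filter_ge htn)]


lemma one_sub_risk {S A : Type*} [Fintype S] (T : S → A → S → ℝ) (C : Set S)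
    (π : (t : ℕ) → (Fin (t + 1) → S) → A)
    (hT1 : ∀ s a, ∑ s', T s a s' = 1) {t : ℕ} (h : Fin (t + 1) → S) :
    1 - risk T C π h = ∑ s' ∈ univ.filter (fun s' => s' ∈ C), T (h (Fin.last t)) (π t h) s' := by
  have := Finset.sum_filter_add_sum_filter_not univ (fun s' => s' ∈ C)
      (fun s' => T (h (Fin.last t)) (π t h) s')
  rw [hT1] at this
  unfold risk
  linarith


lemma key_sum {S A : Type*} [Fintype S] (n : ℕ)
    (C : Set S) (s₀ : S)
    (T : S → A → S → ℝ)
    (hT1 : ∀ s a, ∑ s', T s a s' = 1)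
    (π : (t : ℕ) → (Fin (t + 1) → S) → A)
    (hrisk : ∀ (t : ℕ), t ≤ n → ∀ h : Fin (t + 1) → S, h 0 = s₀ → (∀ i, h i ∈ C) →
      risk T C π h < 1) :
    ∀ (k t : ℕ) (htk : t + k = n), ∀ h : Fin (t + 1) → S, h 0 = s₀ → (∀ i, h i ∈ C) →
      ∑ τ ∈ univ.filter (fun τ : Fin (n + 1) → S =>
          (∀ i, τ i ∈ C) ∧ pre τ t (by omega) = h),
        probFrom T π t τ / survFrom T C π t τ = 1 := by
  intro k
  induction k with
  | zero =>
    intro t htk h hh0 hhsafe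
    obtain rfl : n = t := by omega
    have hfil : (univ.filter (fun τ : Fin (n + 1) → S =>
        (∀ i, τ i ∈ C) ∧ pre τ n (by omega) = h)) = {h} := by
      ext τ
      simp only [mem_filter, mem_univ, true_and, mem_singleton, pre_self]
      constructor
      · rintro ⟨_, rfl⟩; rfl
      · rintro rfl; exact ⟨hhsafe, rfl⟩
    rw [hfil, Finset.sum_singleton]
    unfold probFrom survFrom
    rw [filter_ge_self_empty, Finset.prod_empty, Finset.prod_empty]
    norm_num
  | succ k ih =>
    intro t htk h hh0 hhsafe
    have htn : t < n := by omega
    have hr : risk T C π h < 1 := hrisk t (by omega) h hh0 hhsafe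
    have hrne : (1 : ℝ) - risk T C π h ≠ 0 := by linarith
    rw [← Finset.sum_fiberwise (univ.filter (fun τ : Fin (n + 1) → S =>
          (∀ i, τ i ∈ C) ∧ pre τ t (by omega) = h))
        (fun τ => τ ⟨t + 1, by omega⟩)
        (fun τ => probFrom T π t τ / survFrom T C π t τ)]
    have hset : ∀ s' : S, (univ.filter (fun τ : Fin (n + 1) → S =>
          (∀ i, τ i ∈ C) ∧ pre τ t (by omega) = h)).filter
          (fun τ => τ ⟨t + 1, by omega⟩ = s')
        = univ.filter (fun τ : Fin (n + 1) → S =>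
          (∀ i, τ i ∈ C) ∧ pre τ (t + 1) (by omega) = Fin.snoc h s') := by
      intro s'
      rw [Finset.filter_filter]
      apply Finset.filter_congr
      intro τ _
      rw [pre_eq_snoc_iff τ htn]
      tauto
    have hinner : ∀ s' : S, (∑ τ ∈ univ.filter (fun τ : Fin (n + 1) → S =>
          (∀ i, τ i ∈ C) ∧ pre τ (t + 1) (by omega) = Fin.snoc h s'),
          probFrom T π t τ / survFrom T C π t τ)
        = if s' ∈ C then T (h (Fin.last t)) (π t h) s' / (1 - risk T C π h) else 0 := by
      intro s'
      by_cases hs' : s' ∈ C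
      · rw [if_pos hs']
        have hsafe' : ∀ i : Fin (t + 1 + 1), (Fin.snoc h s' : Fin (t + 1 + 1) → S) i ∈ C := by
          intro i
          refine Fin.lastCases ?_ ?_ i
          · rw [Fin.snoc_last]; exact hs'
          · intro j; rw [Fin.snoc_castSucc]; exact hhsafe j
        have h0' : (Fin.snoc h s' : Fin (t + 1 + 1) → S) 0 = s₀ := by
          have e0 : (0 : Fin (t + 1 + 1)) = Fin.castSucc (0 : Fin (t + 1)) := by
            ext; simp
          rw [e0, Fin.snoc_castSucc, hh0]
        have hih := ih (t + 1) (by omega) (Fin.snoc h s') h0' hsafe'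
        have hterm : ∀ τ ∈ univ.filter (fun τ : Fin (n + 1) → S =>
            (∀ i, τ i ∈ C) ∧ pre τ (t + 1) (by omega) = Fin.snoc h s'),
            probFrom T π t τ / survFrom T C π t τ
              = (T (h (Fin.last t)) (π t h) s' / (1 - risk T C π h))
                * (probFrom T π (t + 1) τ / survFrom T C π (t + 1) τ) := by
          intro τ hτ
          simp only [mem_filter, mem_univ, true_and] at hτ
          obtain ⟨hτsafe, hτpre⟩ := hτ
          rw [pre_eq_snoc_iff τ htn] at hτpre
          obtain ⟨hpre, hlast⟩ := hτpre
          have hτt : τ ⟨t, by omega⟩ = h (Fin.last t) := by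
            rw [← hpre]; rfl
          rw [probFrom_succ htn, survFrom_succ htn, hpre, hlast, hτt, mul_div_mul_comm]
        rw [Finset.sum_congr rfl hterm, ← Finset.mul_sum, hih, mul_one]
      · rw [if_neg hs']
        have hempty : (univ.filter (fun τ : Fin (n + 1) → S =>
            (∀ i, τ i ∈ C) ∧ pre τ (t + 1) (by omega) = Fin.snoc h s')) = ∅ := by
          rw [Finset.filter_eq_empty_iff]
          intro τ _
          rintro ⟨hτsafe, hτpre⟩
          rw [pre_eq_snoc_iff τ htn] at hτpre
          exact hs' (hτpre.2 ▸ hτsafe ⟨t + 1, by omega⟩)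
        rw [hempty, Finset.sum_empty]
    have hcongr : ∀ s' ∈ (univ : Finset S),
        (∑ τ ∈ (univ.filter (fun τ : Fin (n + 1) → S =>
            (∀ i, τ i ∈ C) ∧ pre τ t (by omega) = h)).filter
            (fun τ => τ ⟨t + 1, by omega⟩ = s'),
          probFrom T π t τ / survFrom T C π t τ)
        = if s' ∈ C then T (h (Fin.last t)) (π t h) s' / (1 - risk T C π h)
            else 0 := by
      intro s' _
      rw [hset s']
      exact hinner s'
    rw [Finset.sum_congr rfl hcongr, ← Finset.sum_filter, ← Finset.sum_div,
      ← one_sub_risk T C π hT1 h, div_self hrne]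


/-- **Lemma 2 of the paper.** The execution risk after a safe history equals the
conditional expectation of the suffix sequence execution risk over all trajectories
extending that history. -/
theorem er_eq_expected_ser
    {S A : Type*} [Fintype S] [Nonempty S] [Fintype A] [Nonempty A]
    (n : ℕ) (hn : 1 ≤ n)
    (C : Set S) (s₀ : S) (hs₀ : s₀ ∈ C)
    (T : S → A → S → ℝ)
    (hT0 : ∀ s a s', 0 ≤ T s a s')
    (hT1 : ∀ s a, ∑ s', T s a s' = 1)
    (π : (t : ℕ) → (Fin (t + 1) → S) → A)
    (hrisk : ∀ (t : ℕ), t ≤ n → ∀ h : Fin (t + 1) → S, h 0 = s₀ → (∀ i, h i ∈ C) →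
      risk T C π h < 1)
    (t : ℕ) (ht : t ≤ n)
    (h : Fin (t + 1) → S) (hh0 : h 0 = s₀) (hhsafe : ∀ i, h i ∈ C) :
    erHist n T C π (Nat.succ_le_succ ht) h
      = ∑ τ ∈ univ.filter (fun τ : Fin (n + 1) → S => pre τ t (Nat.succ_le_succ ht) = h),
          probFrom T π t τ * serFrom T C π t τ := by
  have hkey := key_sum n C s₀ T hT1 π hrisk (n - t) t (by omega) h hh0 hhsafe
  have hsub : (univ.filter (fun τ : Fin (n + 1) → S =>
      (∀ i, τ i ∈ C) ∧ pre τ t (Nat.succ_le_succ ht) = h))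
      ⊆ univ.filter (fun τ : Fin (n + 1) → S => pre τ t (Nat.succ_le_succ ht) = h) := by
    intro τ hτ
    simp only [mem_filter, mem_univ, true_and] at *
    exact hτ.2
  have hzero : ∀ τ ∈ univ.filter (fun τ : Fin (n + 1) → S =>
      pre τ t (Nat.succ_le_succ ht) = h),
      τ ∉ univ.filter (fun τ : Fin (n + 1) → S =>
        (∀ i, τ i ∈ C) ∧ pre τ t (Nat.succ_le_succ ht) = h) →
      probFrom T π t τ * serFrom T C π t τ = 0 := by
    intro τ hτ hτ'
    simp only [mem_filter, mem_univ, true_and] at hτ hτ'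
    have hns : ¬ (∀ i, τ i ∈ C) := fun hc => hτ' ⟨hc, hτ⟩
    simp only [serFrom, if_neg hns, mul_zero]
  rw [← Finset.sum_subset hsub hzero]
  have hterm : ∀ τ ∈ univ.filter (fun τ : Fin (n + 1) → S =>
      (∀ i, τ i ∈ C) ∧ pre τ t (Nat.succ_le_succ ht) = h),
      probFrom T π t τ * serFrom T C π t τ
        = probFrom T π t τ / survFrom T C π t τ - probFrom T π t τ := by
    intro τ hτ
    simp only [mem_filter, mem_univ, true_and] at hτ
    obtain ⟨hτsafe, hτpre⟩ := hτ
    have hcast0 : (Fin.castLE (Nat.succ_le_succ ht) (0 : Fin (t + 1)) : Fin (n + 1)) = 0 := by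
      ext; simp
    have hτ0 : τ 0 = s₀ := by
      have := congrFun hτpre 0
      rw [← hh0, ← this, pre, hcast0]
    have hPpos : 0 < survFrom T C π t τ := by
      apply Finset.prod_pos
      intro i _
      have hc0 : (Fin.castLE (Nat.succ_le_succ i.isLt.le) (0 : Fin ((i : ℕ) + 1))
          : Fin (n + 1)) = 0 := by
        ext; simp
      have hpre0 : (pre τ (i : ℕ) (Nat.succ_le_succ i.isLt.le)) 0 = s₀ := by
        rw [pre, hc0, hτ0]
      have := hrisk (i : ℕ) i.isLt.le _ hpre0 (fun j => hτsafe _)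
      linarith
    have hPne : survFrom T C π t τ ≠ 0 := ne_of_gt hPpos
    rw [serFrom, if_pos hτsafe]
    field_simp
  rw [Finset.sum_congr rfl hterm, Finset.sum_sub_distrib, hkey, erHist]
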